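/- Let p_i ∈ P(n, n) be projective partitions, r ∈ P(n, m) a partition, N ≥ 1, and λ_i scalars. If Σ_i λ_i η_{p_i} = 0 in (ℂ^N)^{⊗n}, then Σ_i λ_i N^{rl(r, p_i)} η_{r p_i r*} = 0 in (ℂ^N)^{⊗m}, where η_p = T_p(e_1^{⊗k}) for a projective partition p ∈ P(k,k). -/
import Mathlib


attribute [local instance] Classical.propDecidable

namespace Partitions

/-- A partition with upper row indexed by `α` and lower row indexed by `β`,
modeled as an equivalence relation (set partition) on the disjoint union. -/
abbrev Partn (α β : Type) := Setoid (α ⊕ β)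

variable {α β γ α' β' : Type}

/-- Reflection across the horizontal axis: swap upper and lower rows. -/
def reflP (p : Partn α β) : Partn β α := Setoid.comap Sum.swap p

/-- Inclusion of the two-row diagram of the top partition into the three-row diagram. -/
def iTop : α ⊕ β → α ⊕ β ⊕ γ := Sum.map id Sum.inl

/-- Inclusion of the two-row diagram of the bottom partition into the three-row diagram. -/
def iBot (α : Type) {β γ : Type} : β ⊕ γ → α ⊕ β ⊕ γ := Sum.inr

/-- Inclusion of the outer (top and bottom) rows into the three-row diagram. -/
def iOut : α ⊕ γ → α ⊕ β ⊕ γ := Sum.map id Sum.inr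

/-- Inclusion of the middle row into the three-row diagram. -/
def iMid (α : Type) {β : Type} (γ : Type) (b : β) : α ⊕ β ⊕ γ := Sum.inr (Sum.inl b)

/-- The equivalence relation generated on the three-row diagram when stacking
`p` (with rows `α`, `β`) on top of `q` (with rows `β`, `γ`). -/
def glue (q : Partn β γ) (p : Partn α β) : Setoid (α ⊕ β ⊕ γ) :=
  Relation.EqvGen.setoid (fun x y =>
    (∃ u v, p.r u v ∧ x = iTop u ∧ y = iTop v) ∨
    (∃ u v, q.r u v ∧ x = iBot α u ∧ y = iBot α v))

/-- Vertical concatenation: `p` on top, `q` below; restrict the glued relation to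
the outer rows. -/
def vcomp (q : Partn β γ) (p : Partn α β) : Partn α γ :=
  Setoid.comap iOut (glue q p)

/-- A projective partition: `p² = p = p*`. -/
def Projective (p : Partn α α) : Prop := vcomp p p = p ∧ reflP p = p

/-- A middle point lying on a removed loop: it is connected to no outer point. -/
def IsLoopPt (q : Partn β γ) (p : Partn α β) (b : β) : Prop :=
  ∀ x : α ⊕ γ, ¬ (glue q p).r (iMid α γ b) (iOut x)

/-- The number of removed loops `rl(q, p)` in the vertical concatenation. -/
noncomputable def rl (q : Partn β γ) (p : Partn α β) : ℕ :=
  Nat.card (Quotient (Setoid.comap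
    (fun b : {b : β // IsLoopPt q p b} => iMid α γ b.1) (glue q p)))

/-- The disjoint union of two set partitions. -/
def sumSetoid (p : Setoid α) (q : Setoid β) : Setoid (α ⊕ β) :=
  ⟨Sum.LiftRel p.r q.r, by
    refine ⟨?_, ?_, ?_⟩
    · rintro (a | b)
      · exact .inl (p.iseqv.refl a)
      · exact .inr (q.iseqv.refl b)
    · rintro _ _ (h | h)
      · exact .inl (p.iseqv.symm h)
      · exact .inr (q.iseqv.symm h)
    · rintro _ _ _ (h | h) h₂
      · cases h₂ with
        | inl h₂ => exact .inl (p.iseqv.trans h h₂)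
      · cases h₂ with
        | inr h₂ => exact .inr (q.iseqv.trans h h₂)⟩

/-- Horizontal concatenation `p ⊙ q` of partitions. -/
def hconcat (p : Partn α β) (q : Partn α' β') : Partn (α ⊕ α') (β ⊕ β') :=
  Setoid.comap (Equiv.sumSumSumComm α α' β β') (sumSetoid p q)

/-- Number of through-blocks `t(p)`: blocks containing both an upper and a lower point. -/
noncomputable def throughCount (p : Partn α β) : ℕ :=
  Nat.card {c : Quotient p //
    (∃ a : α, Quotient.mk p (Sum.inl a) = c) ∧ ∃ b : β, Quotient.mk p (Sum.inr b) = c}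

/-- `δ_p(i, j)`: `1` if the indices are constant on each block of `p`, `0` otherwise. -/
noncomputable def deltaP (N : ℕ) (p : Partn α β) (f : α → Fin N) (g : β → Fin N) : ℂ :=
  if ∀ x y, p.r x y → Sum.elim f g x = Sum.elim f g y then 1 else 0

/-- The matrix of the linear map `T_p : (ℂ^N)^{⊗α} → (ℂ^N)^{⊗β}` in the canonical bases. -/
noncomputable def partMatrix (N : ℕ) (p : Partn α β) :
    Matrix (β → Fin N) (α → Fin N) ℂ :=
  fun g f => deltaP N p f g

/-- The identity partition `|` in `P(1,1)` (one block joining the two points). -/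
def identP : Partn (Fin 1) (Fin 1) := ⊤

-- ## Auxiliary lemmas

lemma srefl {δ : Type} (s : Setoid δ) (x : δ) : s.r x x := s.iseqv.refl x

lemma ssymm {δ : Type} {s : Setoid δ} {x y : δ} (h : s.r x y) : s.r y x := s.iseqv.symm h

lemma strans {δ : Type} {s : Setoid δ} {x y z : δ} (h1 : s.r x y) (h2 : s.r y z) :
    s.r x z := s.iseqv.trans h1 h2

lemma glue_of_top {q : Partn β γ} {p : Partn α β} {u v : α ⊕ β} (h : p.r u v) :
    (glue q p).r (iTop u) (iTop v) :=
  Relation.EqvGen.rel _ _ (Or.inl ⟨u, v, h, rfl, rfl⟩)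

lemma glue_of_bot {q : Partn β γ} {p : Partn α β} {u v : β ⊕ γ} (h : q.r u v) :
    (glue q p).r (iBot α u) (iBot α v) :=
  Relation.EqvGen.rel _ _ (Or.inr ⟨u, v, h, rfl, rfl⟩)

lemma coupling {n : ℕ} {p : Partn (Fin n) (Fin n)} (hp : Projective p) {a b : Fin n}
    (h : p.r (Sum.inl a) (Sum.inr b)) : p.r (Sum.inl b) (Sum.inr b) := by
  have hswap : p.r (Sum.inl b) (Sum.inr a) := by
    rw [← hp.2]
    exact ssymm h
  have h2 : (vcomp p p).r (Sum.inl b) (Sum.inr b) := by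
    have s1 : (glue p p).r (iTop (Sum.inl b)) (iTop (Sum.inr a)) := glue_of_top hswap
    have s2 : (glue p p).r (iBot (Fin n) (Sum.inl a)) (iBot (Fin n) (Sum.inr b)) :=
      glue_of_bot h
    show (glue p p).r (iOut (Sum.inl b)) (iOut (Sum.inr b))
    exact strans s1 s2
  rw [hp.1] at h2
  exact h2

lemma vcomp_top_rel {n m : ℕ} {p : Partn (Fin n) (Fin n)} (hp : Projective p)
    (r : Partn (Fin n) (Fin m)) {u v : Fin n ⊕ Fin n} (huv : p.r u v) :
    (vcomp r p).r (Sum.inl (Sum.elim id id u)) (Sum.inl (Sum.elim id id v)) := by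
  have key : ∀ (a : Fin n) (w : Fin n ⊕ Fin n), p.r (Sum.inl a) w →
      (glue r p).r (Sum.inl a) (Sum.inl (Sum.elim id id w)) := by
    intro a w hw
    cases w with
    | inl b => exact glue_of_top (q := r) hw
    | inr b =>
      exact strans (glue_of_top (q := r) hw)
        (ssymm (glue_of_top (q := r) (coupling hp hw)))
  cases u with
  | inl a => exact key a v huv
  | inr a =>
    cases v with
    | inl b => exact ssymm (key b _ (ssymm huv))
    | inr b =>
      have hb : p.r (Sum.inl a) (Sum.inl b) := by rw [← hp.2]; exact huv
      exact glue_of_top (q := r) hb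

/-- The simulation map from the 3-row diagram of `rp` into the 3-row diagram of
`(rp) r*`. -/
def psiMap (n m : ℕ) : Fin n ⊕ Fin n ⊕ Fin m → Fin m ⊕ Fin n ⊕ Fin m :=
  Sum.elim (fun u => Sum.inr (Sum.inl u))
    (Sum.elim (fun v => Sum.inr (Sum.inl v)) (fun x => Sum.inl x))

lemma sim {n m : ℕ} {p : Partn (Fin n) (Fin n)} (hp : Projective p)
    (r : Partn (Fin n) (Fin m)) {z w : Fin n ⊕ Fin n ⊕ Fin m}
    (h : (glue r p).r z w) :
    (glue (vcomp r p) (reflP r)).r (psiMap n m z) (psiMap n m w) := by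
  have h' : Relation.EqvGen _ z w := h
  clear h
  induction h' with
  | rel x y hxy =>
    rcases hxy with ⟨u, v, huv, rfl, rfl⟩ | ⟨u, v, huv, rfl, rfl⟩
    · -- p-pair on the top two rows
      have := glue_of_bot (p := reflP r) (vcomp_top_rel hp r huv)
      cases u <;> cases v <;> exact this
    · -- r-pair on the bottom two rows
      have hr : (reflP r).r (Sum.swap u) (Sum.swap v) := by
        cases u <;> cases v <;> exact huv
      have := glue_of_top (q := vcomp r p) hr
      cases u <;> cases v <;> exact this
  | refl x => exact srefl _ _
  | symm x y _ ih => exact ssymm ih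
  | trans x y zz _ _ ih1 ih2 => exact strans ih1 ih2

/-- Lemma (B): for projective `p`, the deltas of `rp` and of `r p r*` against a constant
upper index agree. -/
lemma deltaP_conj {n m N : ℕ} {p : Partn (Fin n) (Fin n)} (hp : Projective p)
    (r : Partn (Fin n) (Fin m)) (c₀ : Fin N) (g : Fin m → Fin N) :
    deltaP N (vcomp (vcomp r p) (reflP r)) (fun _ => c₀) g
      = deltaP N (vcomp r p) (fun _ => c₀) g := by
  have hiff : (∀ x y, (vcomp (vcomp r p) (reflP r)).r x y →
        Sum.elim (fun _ => c₀) g x = Sum.elim (fun _ => c₀) g y)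
      ↔ (∀ x y, (vcomp r p).r x y →
        Sum.elim (fun _ => c₀) g x = Sum.elim (fun _ => c₀) g y) := by
    constructor
    · intro tc
      have aux : ∀ (u : Fin n) (x : Fin m), (vcomp r p).r (Sum.inl u) (Sum.inr x) →
          c₀ = g x := by
        intro u x hux
        have h1 : (glue (vcomp r p) (reflP r)).r (Sum.inr (Sum.inl u)) (Sum.inr (Sum.inr x)) :=
          glue_of_bot (p := reflP r) hux
        have h2 : (glue (vcomp r p) (reflP r)).r (Sum.inr (Sum.inl u)) (Sum.inl x) :=
          sim hp r hux
        have h3 : (vcomp (vcomp r p) (reflP r)).r (Sum.inl x) (Sum.inr x) := by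
          show (glue (vcomp r p) (reflP r)).r (iOut (Sum.inl x)) (iOut (Sum.inr x))
          exact strans (ssymm h2) h1
        exact tc _ _ h3
      intro x y hxy
      cases x with
      | inl u =>
        cases y with
        | inl v => rfl
        | inr x' => exact aux u x' hxy
      | inr x' =>
        cases y with
        | inl v => exact (aux v x' (ssymm hxy)).symm
        | inr y' =>
          have h1 : (vcomp (vcomp r p) (reflP r)).r (Sum.inr x') (Sum.inr y') :=
            glue_of_bot (p := reflP r) hxy
          exact tc _ _ h1
    · intro sc
      have key : ∀ z w, (glue (vcomp r p) (reflP r)).r z w →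
          Sum.elim (fun _ : Fin m => c₀) (Sum.elim (fun _ : Fin n => c₀) g) z
          = Sum.elim (fun _ : Fin m => c₀) (Sum.elim (fun _ : Fin n => c₀) g) w := by
        intro z w hzw
        have h' : Relation.EqvGen _ z w := hzw
        clear hzw
        induction h' with
        | rel x y hxy =>
          rcases hxy with ⟨u, v, huv, rfl, rfl⟩ | ⟨u, v, huv, rfl, rfl⟩
          · cases u <;> cases v <;> rfl
          · cases u with
            | inl v' =>
              cases v with
              | inl v'' => rfl
              | inr x' => exact sc _ _ huv
            | inr x' =>
              cases v with
              | inl v'' => exact sc _ _ huv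
              | inr y' => exact sc _ _ huv
        | refl x => rfl
        | symm x y _ ih => exact ih.symm
        | trans x y zz _ _ ih1 ih2 => exact ih1.trans ih2
      intro x y hxy
      have := key _ _ hxy
      cases x <;> cases y <;> exact this
  simp only [deltaP]
  by_cases hc : ∀ x y, (vcomp r p).r x y →
      Sum.elim (fun _ => c₀) g x = Sum.elim (fun _ => c₀) g y
  · rw [if_pos hc, if_pos (hiff.mpr hc)]
  · rw [if_neg hc, if_neg (fun hh => hc (hiff.mp hh))]

-- ## The counting lemma

def GoodF {α γ : Type} {n N : ℕ} (q : Partn (Fin n) γ) (p : Partn α (Fin n))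
    (e : α → Fin N) (g : γ → Fin N) (f : Fin n → Fin N) : Prop :=
  ∀ z w, (glue q p).r z w →
    Sum.elim e (Sum.elim f g) z = Sum.elim e (Sum.elim f g) w

lemma elim_iOut {α γ δ : Type} {N : ℕ} (e : α → Fin N) (ff : δ → Fin N) (g : γ → Fin N)
    (x : α ⊕ γ) : Sum.elim e (Sum.elim ff g) (iOut x) = Sum.elim e g x := by
  cases x <;> rfl

lemma delta_mul_eq_ite {α γ : Type} {n N : ℕ} (q : Partn (Fin n) γ) (p : Partn α (Fin n))
    (e : α → Fin N) (g : γ → Fin N) (f : Fin n → Fin N) :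
    deltaP N q f g * deltaP N p e f = if GoodF q p e g f then 1 else 0 := by
  by_cases hg : GoodF q p e g f
  · rw [if_pos hg]
    have h1 : ∀ x y, q.r x y → Sum.elim f g x = Sum.elim f g y := by
      intro x y hxy
      have := hg _ _ (glue_of_bot (p := p) hxy)
      cases x <;> cases y <;> exact this
    have h2 : ∀ x y, p.r x y → Sum.elim e f x = Sum.elim e f y := by
      intro x y hxy
      have := hg _ _ (glue_of_top (q := q) hxy)
      cases x <;> cases y <;> exact this
    rw [deltaP, deltaP, if_pos h1, if_pos h2, one_mul]
  · rw [if_neg hg]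
    by_cases h1 : ∀ x y, q.r x y → Sum.elim f g x = Sum.elim f g y
    · by_cases h2 : ∀ x y, p.r x y → Sum.elim e f x = Sum.elim e f y
      · exfalso
        apply hg
        intro z w hzw
        have h' : Relation.EqvGen _ z w := hzw
        clear hzw
        induction h' with
        | rel x y hxy =>
          rcases hxy with ⟨u, v, huv, rfl, rfl⟩ | ⟨u, v, huv, rfl, rfl⟩
          · have := h2 _ _ huv; cases u <;> cases v <;> exact this
          · have := h1 _ _ huv; cases u <;> cases v <;> exact this
        | refl x => rfl
        | symm x y _ ih => exact ih.symm
        | trans x y zz _ _ ih1 ih2 => exact ih1.trans ih2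
      · rw [deltaP, deltaP, if_neg h2, mul_zero]
    · rw [deltaP, if_neg h1, zero_mul]

lemma sum_delta_mul {α γ : Type} {n N : ℕ} (q : Partn (Fin n) γ) (p : Partn α (Fin n))
    (e : α → Fin N) (g : γ → Fin N) :
    ∑ f : Fin n → Fin N, deltaP N q f g * deltaP N p e f
      = (N : ℂ) ^ rl q p * deltaP N (vcomp q p) e g := by
  have step1 : (∑ f : Fin n → Fin N, deltaP N q f g * deltaP N p e f)
      = ((Nat.card {f : Fin n → Fin N // GoodF q p e g f}) : ℂ) := by
    trans (∑ f : Fin n → Fin N, if GoodF q p e g f then (1 : ℂ) else 0)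
    · exact Finset.sum_congr rfl fun f _ => delta_mul_eq_ite q p e g f
    · rw [Finset.sum_boole]
      norm_cast
      rw [Nat.card_eq_fintype_card, Fintype.card_subtype]
  by_cases hqp : ∀ x y, (vcomp q p).r x y → Sum.elim e g x = Sum.elim e g y
  · have hout : ∀ x y : α ⊕ γ, (glue q p).r (iOut x) (iOut y) →
        Sum.elim e g x = Sum.elim e g y := fun x y hxy => hqp x y hxy
    have exists_out : ∀ {b : Fin n}, ¬ IsLoopPt q p b →
        ∃ x : α ⊕ γ, (glue q p).r (iMid α γ b) (iOut x) := by
      intro b hb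
      unfold IsLoopPt at hb
      push_neg at hb
      exact hb
    set L := Quotient (Setoid.comap
      (fun b : {b : Fin n // IsLoopPt q p b} => iMid α γ b.1) (glue q p)) with hL
    set FF : (L → Fin N) → (Fin n → Fin N) := fun h b =>
      if hb : IsLoopPt q p b then h (Quotient.mk _ ⟨b, hb⟩)
      else Sum.elim e g (Classical.choose (exists_out hb)) with hFF
    have FFgood : ∀ h, GoodF q p e g (FF h) := by
      intro h
      have aux1 : ∀ (b : Fin n) (x : α ⊕ γ), (glue q p).r (iMid α γ b) (iOut x) →
          FF h b = Sum.elim e g x := by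
        intro b x hbx
        have hnl : ¬ IsLoopPt q p b := fun hl => hl x hbx
        have hx0 := Classical.choose_spec (exists_out hnl)
        rw [hFF]
        dsimp only
        rw [dif_neg hnl]
        exact hout _ _ (strans (ssymm hx0) hbx)
      have aux2 : ∀ b b' : Fin n, (glue q p).r (iMid α γ b) (iMid α γ b') →
          FF h b = FF h b' := by
        intro b b' hbb
        by_cases hb : IsLoopPt q p b
        · have hb' : IsLoopPt q p b' := fun x hx => hb x (strans hbb hx)
          rw [hFF]; dsimp only; rw [dif_pos hb, dif_pos hb']
          exact congrArg h (Quot.sound hbb)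
        · have hb' : ¬ IsLoopPt q p b' :=
            fun hl => hb (fun x hx => hl x (strans (ssymm hbb) hx))
          rw [hFF]; dsimp only; rw [dif_neg hb, dif_neg hb']
          have hx1 := Classical.choose_spec (exists_out hb)
          have hx2 := Classical.choose_spec (exists_out hb')
          exact hout _ _ (strans (ssymm hx1) (strans hbb hx2))
      intro z w hzw
      rcases z with a | b | c
      · rcases w with a' | b' | c'
        · exact hout (Sum.inl a) (Sum.inl a') hzw
        · exact (aux1 b' (Sum.inl a) (ssymm hzw)).symm
        · exact hout (Sum.inl a) (Sum.inr c') hzw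
      · rcases w with a' | b' | c'
        · exact aux1 b (Sum.inl a') hzw
        · exact aux2 b b' hzw
        · exact aux1 b (Sum.inr c') hzw
      · rcases w with a' | b' | c'
        · exact hout (Sum.inr c) (Sum.inl a') hzw
        · exact (aux1 b' (Sum.inr c) (ssymm hzw)).symm
        · exact hout (Sum.inr c) (Sum.inr c') hzw
    have eqv : {f : Fin n → Fin N // GoodF q p e g f} ≃ (L → Fin N) :=
      { toFun := fun f => Quotient.lift (fun b => f.1 b.1) (fun b b' hbb => f.2 _ _ hbb)
        invFun := fun h => ⟨FF h, FFgood h⟩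
        left_inv := by
          rintro ⟨f, hf⟩
          apply Subtype.ext
          funext b
          show FF _ b = f b
          rw [hFF]
          dsimp only
          by_cases hb : IsLoopPt q p b
          · rw [dif_pos hb]
            rfl
          · rw [dif_neg hb]
            have hthis := hf _ _ (Classical.choose_spec (exists_out hb))
            rw [elim_iOut] at hthis
            exact hthis.symm
        right_inv := by
          intro h
          funext l
          induction l using Quotient.ind with
          | _ b =>
            show FF h b.1 = h (Quotient.mk _ b)
            rw [hFF]
            dsimp only
            rw [dif_pos b.2] }
    have hcard : Nat.card {f : Fin n → Fin N // GoodF q p e g f} = N ^ rl q p := by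
      rw [Nat.card_congr eqv, Nat.card_fun, Nat.card_eq_fintype_card (α := Fin N),
        Fintype.card_fin]
      rfl
    rw [step1, hcard, deltaP, if_pos hqp, mul_one]
    push_cast
    ring
  · have hempty : IsEmpty {f : Fin n → Fin N // GoodF q p e g f} := by
      constructor
      rintro ⟨f, hf⟩
      apply hqp
      intro x y hxy
      have := hf (iOut x) (iOut y) hxy
      cases x <;> cases y <;> exact this
    rw [step1, deltaP, if_neg hqp, Nat.card_of_isEmpty]
    simp
/-- if `Σ λ_i η_{p_i} = 0` for projective `p_i ∈ P(n,n)`, then for any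
`r ∈ P(n,m)` also `Σ λ_i N^{rl(r,p_i)} η_{r p_i r*} = 0`. -/
theorem eta_relation_conjugation (n m N : ℕ) (hN : 1 ≤ N) (ι : Type) [Fintype ι]
    (p : ι → Partn (Fin n) (Fin n)) (hp : ∀ i, Projective (p i))
    (r : Partn (Fin n) (Fin m)) (lam : ι → ℂ)
    (h : ∑ i, lam i • (fun g => partMatrix N (p i) g (fun _ => ⟨0, hN⟩))
          = (0 : (Fin n → Fin N) → ℂ)) :
    ∑ i, (lam i * (N : ℂ) ^ rl r (p i)) •
        (fun g => partMatrix N (vcomp (vcomp r (p i)) (reflP r)) g (fun _ => ⟨0, hN⟩))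
      = (0 : (Fin m → Fin N) → ℂ) := by
  funext g
  simp only [Finset.sum_apply, Pi.smul_apply, smul_eq_mul, Pi.zero_apply, partMatrix]
  have hpt : ∀ f : Fin n → Fin N,
      ∑ i, lam i * deltaP N (p i) (fun _ => ⟨0, hN⟩) f = 0 := by
    intro f
    have hcf := congrFun h f
    simpa [Finset.sum_apply, Pi.smul_apply, smul_eq_mul, partMatrix] using hcf
  simp only [mul_assoc]
  calc ∑ i, lam i * ((N : ℂ) ^ rl r (p i) *
        deltaP N (vcomp (vcomp r (p i)) (reflP r)) (fun _ => ⟨0, hN⟩) g)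
      = ∑ i, ∑ f : Fin n → Fin N,
          lam i * (deltaP N r f g * deltaP N (p i) (fun _ => ⟨0, hN⟩) f) := by
        refine Finset.sum_congr rfl fun i _ => ?_
        rw [deltaP_conj (hp i) r, ← sum_delta_mul r (p i), Finset.mul_sum]
    _ = ∑ f : Fin n → Fin N, deltaP N r f g *
          ∑ i, lam i * deltaP N (p i) (fun _ => ⟨0, hN⟩) f := by
        rw [Finset.sum_comm]
        refine Finset.sum_congr rfl fun f _ => ?_
        rw [Finset.mul_sum]
        refine Finset.sum_congr rfl fun i _ => ?_
        ring
    _ = 0 := by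
        refine Finset.sum_eq_zero fun f _ => ?_
        rw [hpt f, mul_zero]

end Partitions
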